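/- Let N ≥ 1 and T ≥ 2 be integers and consider panel data Y_{i,t} = μ_i + e_{i,t}, i = 1,…,N, t = 1,…,T (no change in the mean), where each μ_i is a real constant and the random variables e_{i,t} are mutually independent across all (i,t), with e_{i,t} distributed as a centered Gaussian with variance σ_i² > 0 for every t. Let w_1,…,w_{T−1} be nonnegative weights, not all zero, and define κ̂²_{N,T}(w) = (1/3)·( Σ_{k=1}^{T−1} m_T(k/T)⁴ w_k )^{−1} · Σ_{k=1}^{T−1} m_T(k/T)² w_k · z̈_k, where z̈_k = N^{−1} Σ_{i=1}^N Z_i(k/T)⁴ and Z_i is the CUSUM process of panel i. Then E[ κ̂²_{N,T}(w) ] = N^{−1} Σ_{i=1}^N σ_i⁴, i.e., κ̂²_{N,T}(w) is an exactly unbiased estimator of κ̄_N² = N^{−1} Σ_{i=1}^N σ_i⁴ under the null hypothesis of no change. -/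

import Mathlib

open MeasureTheory ProbabilityTheory Real Filter Set
open scoped NNReal ENNReal

/-! ### Auxiliary lemmas: moments of the Gaussian integral -/

lemma G1 {b : ℝ} (hb : 0 < b) (n : ℕ) :
    Integrable (fun x : ℝ => x ^ n * Real.exp (-b * x ^ 2)) := by
  have h := integrable_rpow_mul_exp_neg_mul_sq hb (s := (n : ℝ))
    (by exact_mod_cast neg_one_lt_zero.trans_le (Nat.cast_nonneg n))
  simpa [Real.rpow_natCast] using h

lemma Gneg (f : ℝ → ℝ) : ∫ x : ℝ, f (-x) = ∫ x : ℝ, f x := by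
  have A : MeasurableEmbedding fun x : ℝ => -x :=
    (Homeomorph.neg ℝ).isClosedEmbedding.measurableEmbedding
  have h := A.integral_map (μ := (volume : Measure ℝ)) f
  rw [Measure.map_neg_eq_self (volume : Measure ℝ)] at h
  exact h.symm

lemma G2 {b : ℝ} {n : ℕ} (hn : Odd n) :
    ∫ x : ℝ, x ^ n * Real.exp (-b * x ^ 2) = 0 := by
  have h := Gneg (fun x => x ^ n * Real.exp (-b * x ^ 2))
  have h2 : ∀ x : ℝ, (-x) ^ n * Real.exp (-b * (-x) ^ 2)
      = -(x ^ n * Real.exp (-b * x ^ 2)) := by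
    intro x; rw [hn.neg_pow]; ring_nf
  simp only [h2, integral_neg] at h
  linarith

lemma G3 {b : ℝ} (hb : 0 < b) (n : ℕ) :
    ∫ x : ℝ, x ^ (n + 2) * Real.exp (-b * x ^ 2)
      = ((n + 1 : ℝ) / (2 * b)) * ∫ x : ℝ, x ^ n * Real.exp (-b * x ^ 2) := by
  set F : ℝ → ℝ := fun x => x ^ (n + 1) * Real.exp (-b * x ^ 2) with hF
  set F' : ℝ → ℝ := fun x =>
    (n + 1 : ℝ) * x ^ n * Real.exp (-b * x ^ 2)
      - 2 * b * (x ^ (n + 2) * Real.exp (-b * x ^ 2)) with hF'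
  have hderiv : ∀ x : ℝ, HasDerivAt F (F' x) x := by
    intro x
    have h1 : HasDerivAt (fun x : ℝ => x ^ (n + 1)) ((n + 1 : ℝ) * x ^ n) x := by
      simpa using hasDerivAt_pow (n + 1) x
    have h3 : HasDerivAt (fun x : ℝ => -b * x ^ 2) (-b * (2 * x)) x := by
      simpa using (hasDerivAt_pow 2 x).const_mul (-b)
    have := h1.mul h3.exp
    refine this.congr_deriv ?_
    show _ = (n + 1 : ℝ) * x ^ n * Real.exp (-b * x ^ 2)
      - 2 * b * (x ^ (n + 2) * Real.exp (-b * x ^ 2))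
    ring
  have hc := tendsto_rpow_abs_mul_exp_neg_mul_sq_cocompact hb ((n + 1 : ℕ) : ℝ)
  have hnorm : ∀ x : ℝ, |x| ^ ((n + 1 : ℕ) : ℝ) * rexp (-b * x ^ 2) = ‖F x‖ := by
    intro x
    rw [Real.rpow_natCast]
    simp [hF, abs_mul, abs_of_pos (Real.exp_pos _), abs_pow]
  have hcoT : (atTop : Filter ℝ) ≤ cocompact ℝ := by
    rw [cocompact_eq_atBot_atTop]; exact le_sup_right
  have hcoB : (atBot : Filter ℝ) ≤ cocompact ℝ := by
    rw [cocompact_eq_atBot_atTop]; exact le_sup_left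
  have htop : Tendsto F atTop (nhds 0) := by
    rw [tendsto_zero_iff_norm_tendsto_zero]
    exact (hc.mono_left hcoT).congr hnorm
  have hbot : Tendsto F atBot (nhds 0) := by
    rw [tendsto_zero_iff_norm_tendsto_zero]
    exact (hc.mono_left hcoB).congr hnorm
  have hint' : Integrable F' := by
    have := ((G1 hb n).const_mul ((n : ℝ) + 1)).sub (((G1 hb (n + 2)).const_mul (2 * b)))
    refine this.congr ?_
    filter_upwards with x
    simp only [Pi.sub_apply, hF']; ring
  have hIoi : ∫ x in Ioi (0:ℝ), F' x = 0 - F 0 :=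
    integral_Ioi_of_hasDerivAt_of_tendsto' (fun x _ => hderiv x) hint'.integrableOn htop
  have hIic : ∫ x in Iic (0:ℝ), F' x = F 0 - 0 :=
    integral_Iic_of_hasDerivAt_of_tendsto' (fun x _ => hderiv x) hint'.integrableOn hbot
  have hsplit : ∫ x, F' x = (∫ x in Iic (0:ℝ), F' x) + ∫ x in Ioi (0:ℝ), F' x := by
    have := integral_add_compl (measurableSet_Iic (a := (0:ℝ))) hint'
    rw [Set.compl_Iic] at this
    exact this.symm
  have hzero : ∫ x, F' x = 0 := by rw [hsplit, hIoi, hIic]; ring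
  have hsub : ∫ x, F' x = ((n : ℝ) + 1) * (∫ x : ℝ, x ^ n * Real.exp (-b * x ^ 2))
      - 2 * b * ∫ x : ℝ, x ^ (n + 2) * Real.exp (-b * x ^ 2) := by
    calc ∫ x, F' x
        = ∫ x : ℝ, (((n : ℝ) + 1) * (x ^ n * Real.exp (-b * x ^ 2))
            - (2 * b) * (x ^ (n + 2) * Real.exp (-b * x ^ 2))) := by
          congr 1; funext x; simp only [hF']; ring
      _ = _ := by
          rw [integral_sub ((G1 hb n).const_mul _) ((G1 hb (n + 2)).const_mul _),
            MeasureTheory.integral_const_mul, MeasureTheory.integral_const_mul]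
  rw [hsub] at hzero
  have h2b : (2 * b) ≠ 0 := by positivity
  rw [div_mul_eq_mul_div, eq_div_iff h2b]
  linarith

/-! ### Moments of the real Gaussian distribution -/

lemma gauss_pdf_eq (v : ℝ≥0) (x : ℝ) :
    gaussianPDFReal 0 v x = (Real.sqrt (2 * π * v))⁻¹
      * Real.exp (-(2 * (v:ℝ))⁻¹ * x ^ 2) := by
  rw [gaussianPDFReal]
  congr 1
  rw [sub_zero]
  congr 1
  rw [neg_div, neg_mul, neg_inj, div_eq_mul_inv, mul_comm]

lemma gauss_integral_eq (v : ℝ≥0) (hv : v ≠ 0) (f : ℝ → ℝ) :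
    ∫ x, f x ∂(gaussianReal 0 v)
      = ∫ x : ℝ, ((Real.sqrt (2 * π * v))⁻¹
          * Real.exp (-(2 * (v:ℝ))⁻¹ * x ^ 2)) * f x := by
  rw [gaussianReal_of_var_ne_zero _ hv]
  have hpdf : gaussianPDF 0 v = fun x => ((gaussianPDFReal 0 v x).toNNReal : ℝ≥0∞) := rfl
  rw [hpdf, integral_withDensity_eq_integral_smul
    ((measurable_gaussianPDFReal 0 v).real_toNNReal)]
  congr 1
  funext x
  rw [NNReal.smul_def, Real.coe_toNNReal _ (gaussianPDFReal_nonneg 0 v x), gauss_pdf_eq,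
    smul_eq_mul]

lemma gauss_integrable_pow (v : ℝ≥0) (hv : v ≠ 0) (n : ℕ) :
    Integrable (fun x : ℝ => x ^ n) (gaussianReal 0 v) := by
  have hvp : (0:ℝ) < (v:ℝ) := NNReal.coe_pos.mpr (pos_iff_ne_zero.mpr hv)
  have hb : (0:ℝ) < (2 * (v:ℝ))⁻¹ := by positivity
  rw [gaussianReal_of_var_ne_zero _ hv]
  have hpdf : gaussianPDF 0 v = fun x => ((gaussianPDFReal 0 v x).toNNReal : ℝ≥0∞) := rfl
  rw [hpdf, integrable_withDensity_iff_integrable_coe_smul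
    ((measurable_gaussianPDFReal 0 v).real_toNNReal)]
  have : Integrable (fun x : ℝ => ((Real.sqrt (2 * π * v))⁻¹
      * Real.exp (-(2 * (v:ℝ))⁻¹ * x ^ 2)) * x ^ n) := by
    have := (G1 hb n).const_mul (Real.sqrt (2 * π * v))⁻¹
    refine this.congr ?_
    filter_upwards with x; ring
  refine this.congr ?_
  filter_upwards with x
  rw [smul_eq_mul, Real.coe_toNNReal _ (gaussianPDFReal_nonneg 0 v x), gauss_pdf_eq]

lemma gauss_pow_eq (v : ℝ≥0) (hv : v ≠ 0) (n : ℕ) :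
    ∫ x, x ^ n ∂(gaussianReal 0 v) = (Real.sqrt (2 * π * v))⁻¹
      * ∫ x : ℝ, x ^ n * Real.exp (-(2 * (v:ℝ))⁻¹ * x ^ 2) := by
  rw [gauss_integral_eq v hv]
  rw [← MeasureTheory.integral_const_mul]
  congr 1; funext x; ring

lemma gauss_CI0 (v : ℝ≥0) (hv : v ≠ 0) :
    (Real.sqrt (2 * π * v))⁻¹
      * ∫ x : ℝ, x ^ 0 * Real.exp (-(2 * (v:ℝ))⁻¹ * x ^ 2) = 1 := by
  rw [← gauss_pow_eq v hv 0]
  simp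

lemma gauss_moment_odd (v : ℝ≥0) (hv : v ≠ 0) {n : ℕ} (hn : Odd n) :
    ∫ x, x ^ n ∂(gaussianReal 0 v) = 0 := by
  rw [gauss_pow_eq v hv n, G2 hn, mul_zero]

lemma gauss_moment_two (v : ℝ≥0) (hv : v ≠ 0) :
    ∫ x, x ^ 2 ∂(gaussianReal 0 v) = (v : ℝ) := by
  have hvp : (0:ℝ) < (v:ℝ) := NNReal.coe_pos.mpr (pos_iff_ne_zero.mpr hv)
  have hb : (0:ℝ) < (2 * (v:ℝ))⁻¹ := by positivity
  have h := G3 hb 0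
  rw [gauss_pow_eq v hv 2]
  rw [show (2:ℕ) = 0 + 2 from rfl, h]
  have hC := gauss_CI0 v hv
  have hcoef : ((0:ℕ) + 1 : ℝ) / (2 * (2 * (v:ℝ))⁻¹) = (v:ℝ) := by
    push_cast; field_simp
    norm_num
  rw [hcoef]
  linear_combination (v:ℝ) * hC

lemma gauss_moment_four (v : ℝ≥0) (hv : v ≠ 0) :
    ∫ x, x ^ 4 ∂(gaussianReal 0 v) = 3 * (v : ℝ) ^ 2 := by
  have hvp : (0:ℝ) < (v:ℝ) := NNReal.coe_pos.mpr (pos_iff_ne_zero.mpr hv)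
  have hb : (0:ℝ) < (2 * (v:ℝ))⁻¹ := by positivity
  have h := G3 hb 2
  rw [gauss_pow_eq v hv 4]
  rw [show (4:ℕ) = 2 + 2 from rfl, h]
  have h2 : (Real.sqrt (2 * π * v))⁻¹
      * ∫ x : ℝ, x ^ 2 * Real.exp (-(2 * (v:ℝ))⁻¹ * x ^ 2) = (v:ℝ) := by
    rw [← gauss_pow_eq v hv 2]; exact gauss_moment_two v hv
  have hcoef : ((2:ℕ) + 1 : ℝ) / (2 * (2 * (v:ℝ))⁻¹) = 3 * (v:ℝ) := by
    push_cast; field_simp; ring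
  rw [hcoef]
  linear_combination 3 * (v:ℝ) * h2

/-! ### Transfer to random variables -/

lemma rv_pow_integrable {Ω : Type*} [MeasurableSpace Ω] {P : Measure Ω} {X : Ω → ℝ}
    (hX : Measurable X) {v : ℝ≥0} (hv : v ≠ 0)
    (hmap : Measure.map X P = gaussianReal 0 v) (n : ℕ) :
    Integrable (fun ω => X ω ^ n) P := by
  have h := gauss_integrable_pow v hv n
  rw [← hmap] at h
  exact (integrable_map_measure
    ((measurable_id.pow_const n).aestronglyMeasurable) hX.aemeasurable).mp h

lemma rv_pow_integral {Ω : Type*} [MeasurableSpace Ω] {P : Measure Ω} {X : Ω → ℝ}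
    (hX : Measurable X) {v : ℝ≥0}
    (hmap : Measure.map X P = gaussianReal 0 v) (n : ℕ) :
    ∫ ω, X ω ^ n ∂P = ∫ x, x ^ n ∂(gaussianReal 0 v) := by
  have h : ∫ y, (fun x : ℝ => x ^ n) y ∂(Measure.map X P)
      = ∫ ω, (fun x : ℝ => x ^ n) (X ω) ∂P :=
    integral_map hX.aemeasurable (by fun_prop)
  rw [← hmap]
  exact h.symm

/-! ### Fourth moment of a sum of independent centered variables -/

lemma sum_moment4 {Ω : Type*} [MeasurableSpace Ω] {P : Measure Ω} [IsProbabilityMeasure P]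
    {ι : Type*} (g : ι → Ω → ℝ) (V : ι → ℝ)
    (hindep : iIndepFun g P)
    (hmeas : ∀ j, Measurable (g j))
    (hint : ∀ j (n : ℕ), Integrable (fun ω => g j ω ^ n) P)
    (h1 : ∀ j, ∫ ω, g j ω ^ 1 ∂P = 0)
    (h2 : ∀ j, ∫ ω, g j ω ^ 2 ∂P = V j)
    (h3 : ∀ j, ∫ ω, g j ω ^ 3 ∂P = 0)
    (h4 : ∀ j, ∫ ω, g j ω ^ 4 ∂P = 3 * V j ^ 2)
    (s : Finset ι) :
    (∀ n : ℕ, Integrable (fun ω => (∑ j ∈ s, g j ω) ^ n) P) ∧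
    (∫ ω, (∑ j ∈ s, g j ω) ^ 1 ∂P = 0) ∧
    (∫ ω, (∑ j ∈ s, g j ω) ^ 2 ∂P = ∑ j ∈ s, V j) ∧
    (∫ ω, (∑ j ∈ s, g j ω) ^ 3 ∂P = 0) ∧
    (∫ ω, (∑ j ∈ s, g j ω) ^ 4 ∂P = 3 * (∑ j ∈ s, V j) ^ 2) := by
  classical
  induction s using Finset.induction_on with
  | empty => simp
  | @insert u s hu IH =>
    obtain ⟨hintS, IS1, IS2, IS3, IS4⟩ := IH
    set S : Ω → ℝ := fun ω => ∑ j ∈ s, g j ω with hS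
    set X : Ω → ℝ := g u with hX
    have hSfun : (∑ j ∈ s, g j) = S := by
      funext ω; rw [Finset.sum_apply]
    have hSX : IndepFun S X P := by
      have := hindep.indepFun_finsetSum_of_notMem hmeas hu
      rwa [hSfun] at this
    have hpow : ∀ a b : ℕ, IndepFun (fun ω => S ω ^ a) (fun ω => X ω ^ b) P := by
      intro a b
      exact hSX.comp (measurable_id.pow_const a) (measurable_id.pow_const b)
    have hprod_int : ∀ a b : ℕ, Integrable (fun ω => S ω ^ a * X ω ^ b) P := by
      intro a b
      exact (hpow a b).integrable_mul (hintS a) (hint u b)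
    have hprod_eq : ∀ a b : ℕ,
        ∫ ω, S ω ^ a * X ω ^ b ∂P = (∫ ω, S ω ^ a ∂P) * ∫ ω, X ω ^ b ∂P := by
      intro a b
      exact (hpow a b).integral_fun_mul_eq_mul_integral (hintS a).aestronglyMeasurable
        (hint u b).aestronglyMeasurable
    have hsum : ∀ ω, ∑ j ∈ insert u s, g j ω = S ω + X ω := by
      intro ω; rw [Finset.sum_insert hu]; ring
    have hintNew : ∀ n : ℕ, Integrable (fun ω => (∑ j ∈ insert u s, g j ω) ^ n) P := by
      intro n
      have h : Integrable (fun ω => ∑ k ∈ Finset.range (n+1),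
          S ω ^ k * X ω ^ (n - k) * (n.choose k : ℝ)) P :=
        integrable_finset_sum _ (fun k _ => (hprod_int k (n-k)).mul_const _)
      refine h.congr ?_
      filter_upwards with ω
      rw [hsum ω, ← add_pow]
    have hS0 : ∫ ω, S ω ^ 0 ∂P = 1 := by simp
    have hX0 : ∫ ω, X ω ^ 0 ∂P = 1 := by simp
    have key : ∀ n : ℕ, ∫ ω, (∑ j ∈ insert u s, g j ω) ^ n ∂P
        = ∑ k ∈ Finset.range (n+1),
            (∫ ω, S ω ^ k ∂P) * (∫ ω, X ω ^ (n - k) ∂P) * (n.choose k : ℝ) := by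
      intro n
      calc ∫ ω, (∑ j ∈ insert u s, g j ω) ^ n ∂P
          = ∫ ω, ∑ k ∈ Finset.range (n+1),
              S ω ^ k * X ω ^ (n - k) * (n.choose k : ℝ) ∂P := by
            congr 1; funext ω; rw [hsum ω, add_pow]
        _ = ∑ k ∈ Finset.range (n+1),
              ∫ ω, S ω ^ k * X ω ^ (n - k) * (n.choose k : ℝ) ∂P :=
            integral_finset_sum _ (fun k _ => (hprod_int k (n-k)).mul_const _)
        _ = _ := by
            refine Finset.sum_congr rfl fun k _ => ?_
            rw [integral_mul_const, hprod_eq]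
    have hVsum : ∑ j ∈ insert u s, V j = ∑ j ∈ s, V j + V u := by
      rw [Finset.sum_insert hu]; ring
    have hS1 : ∫ ω, S ω ∂P = 0 := by simpa using IS1
    have hX1 : ∫ ω, X ω ∂P = 0 := by simpa using h1 u
    have hch : ((Nat.choose 4 2 : ℕ) : ℝ) = 6 := by norm_num [Nat.choose]
    have hS2 : ∫ ω, S ω ^ 2 ∂P = ∑ j ∈ s, V j := IS2
    have hS3 : ∫ ω, S ω ^ 3 ∂P = 0 := IS3
    have hS4 : ∫ ω, S ω ^ 4 ∂P = 3 * (∑ j ∈ s, V j) ^ 2 := IS4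
    have hX2 : ∫ ω, X ω ^ 2 ∂P = V u := h2 u
    have hX3 : ∫ ω, X ω ^ 3 ∂P = 0 := h3 u
    have hX4 : ∫ ω, X ω ^ 4 ∂P = 3 * V u ^ 2 := h4 u
    refine ⟨hintNew, ?_, ?_, ?_, ?_⟩
    · rw [key 1]
      simp [Finset.sum_range_succ, hS1, hX1, hS0, hX0]
    · rw [key 2, hVsum]
      simp only [Finset.sum_range_succ, Finset.sum_range_zero]
      norm_num [IS1, IS2, h1 u, h2 u, hS0, hX0, hS1, hX1, hS2, hX2]
      ring
    · rw [key 3]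
      simp only [Finset.sum_range_succ, Finset.sum_range_zero]
      norm_num [IS1, IS2, IS3, h1 u, h2 u, h3 u, hS0, hX0, hS1, hX1, hS2, hX2, hS3, hX3]
    · rw [key 4, hVsum]
      simp only [Finset.sum_range_succ, Finset.sum_range_zero]
      norm_num [IS1, IS2, IS3, IS4, h1 u, h2 u, h3 u, h4 u, hS0, hX0, hS1, hX1, hch, hS2, hX2, hS3, hX3, hS4, hX4]
      ring

/-- `m(s) = s(1-s)`. Note that `m_T(k/T) = m(k/T)` for integers `1 ≤ k ≤ T-1`. -/
noncomputable def m (s : ℝ) : ℝ := s * (1 - s)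

/-- CUSUM process of the data `Y 1, …, Y T`:
`Z(s) = T^{-1/2} ∑_{k=1}^{⌊Ts⌋} (Y k - Ȳ_T)`. -/
noncomputable def cusum (T : ℕ) (Y : ℕ → ℝ) (s : ℝ) : ℝ :=
  (Real.sqrt T)⁻¹ * ∑ k ∈ Finset.Icc 1 (⌊(T : ℝ) * s⌋.toNat),
    (Y k - (T : ℝ)⁻¹ * ∑ t ∈ Finset.Icc 1 T, Y t)

/-- The key per-panel computation: integrability and fourth moment of the CUSUM. -/
lemma cusum_pow4 {Ω : Type*} [MeasurableSpace Ω] (P : Measure Ω) [IsProbabilityMeasure P]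
    (N T : ℕ) (hT : 2 ≤ T)
    (μ : ℕ → ℝ) (v : ℕ → NNReal) (hv : ∀ i ∈ Finset.Icc 1 N, 0 < v i)
    (e : ℕ → ℕ → Ω → ℝ)
    (hmeas : ∀ i t, Measurable (e i t))
    (hindep : iIndepFun
      (fun p : (Finset.Icc 1 N ×ˢ Finset.Icc 1 T) =>
        e (p : ℕ × ℕ).1 (p : ℕ × ℕ).2) P)
    (hgauss : ∀ i ∈ Finset.Icc 1 N, ∀ t ∈ Finset.Icc 1 T,
      Measure.map (e i t) P = gaussianReal 0 (v i))
    (Y : ℕ → ℕ → Ω → ℝ) (hY : ∀ i t ω, Y i t ω = μ i + e i t ω)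
    (i : ℕ) (hi : i ∈ Finset.Icc 1 N) (k : ℕ) (hk : k ∈ Finset.Icc 1 (T - 1)) :
    Integrable (fun ω => (cusum T (fun t => Y i t ω) ((k : ℝ) / T)) ^ 4) P ∧
    ∫ ω, (cusum T (fun t => Y i t ω) ((k : ℝ) / T)) ^ 4 ∂P
      = 3 * ((v i : ℝ)) ^ 2 * (m ((k : ℝ) / T)) ^ 2 := by
  classical
  obtain ⟨hk1, hk2⟩ := Finset.mem_Icc.mp hk
  have hTpos : 0 < T := by omega
  have hkT : k ≤ T := by omega
  have hTR : (0:ℝ) < (T:ℝ) := by exact_mod_cast hTpos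
  have hTne : (T:ℝ) ≠ 0 := hTR.ne'
  set r : ℝ := (k : ℝ) / T with hr
  set c : ℕ → ℝ := fun t => (if t ≤ k then (1:ℝ) else 0) - (k:ℝ)/T with hc
  -- floor computation
  have hfloor : (⌊(T:ℝ) * ((k:ℝ)/T)⌋).toNat = k := by
    have h : (T:ℝ) * ((k:ℝ)/T) = (k:ℝ) := by field_simp
    rw [h, Int.floor_natCast, Int.toNat_natCast]
  have hcard : (Finset.Icc 1 T).card = T := by rw [Nat.card_Icc]; omega
  have hcardk : (Finset.Icc 1 k).card = k := by rw [Nat.card_Icc]; omega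
  have hsubk : Finset.Icc 1 k ⊆ Finset.Icc 1 T := by
    intro t ht
    rw [Finset.mem_Icc] at ht ⊢
    omega
  -- rewriting the CUSUM as a linear combination of the errors
  have hmean : ∀ ω, (T:ℝ)⁻¹ * ∑ t ∈ Finset.Icc 1 T, Y i t ω
      = μ i + (T:ℝ)⁻¹ * ∑ t ∈ Finset.Icc 1 T, e i t ω := by
    intro ω
    simp only [hY]
    rw [Finset.sum_add_distrib, Finset.sum_const, hcard, nsmul_eq_mul, mul_add,
      ← mul_assoc, inv_mul_cancel₀ hTne, one_mul]
  have hZ : ∀ ω, cusum T (fun t => Y i t ω) r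
      = (Real.sqrt T)⁻¹ * ∑ t ∈ Finset.Icc 1 T, c t * e i t ω := by
    intro ω
    rw [cusum, hr, hfloor]
    congr 1
    have step1 : ∑ t ∈ Finset.Icc 1 k,
        (Y i t ω - (T:ℝ)⁻¹ * ∑ t' ∈ Finset.Icc 1 T, Y i t' ω)
        = (∑ t ∈ Finset.Icc 1 k, e i t ω)
          - (k:ℝ) * ((T:ℝ)⁻¹ * ∑ t' ∈ Finset.Icc 1 T, e i t' ω) := by
      have : ∀ t, Y i t ω - (T:ℝ)⁻¹ * ∑ t' ∈ Finset.Icc 1 T, Y i t' ω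
          = e i t ω - (T:ℝ)⁻¹ * ∑ t' ∈ Finset.Icc 1 T, e i t' ω := by
        intro t; rw [hY, hmean ω]; ring
      simp only [this]
      rw [Finset.sum_sub_distrib, Finset.sum_const, hcardk, nsmul_eq_mul]
    have step2 : ∑ t ∈ Finset.Icc 1 T, c t * e i t ω
        = (∑ t ∈ Finset.Icc 1 k, e i t ω)
          - (k:ℝ)/T * ∑ t' ∈ Finset.Icc 1 T, e i t' ω := by
      have hterm : ∀ t, c t * e i t ω
          = (if t ≤ k then e i t ω else 0) - (k:ℝ)/T * e i t ω := by
        intro t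
        by_cases h : t ≤ k <;> simp [hc, h] <;> ring
      simp only [hterm]
      rw [Finset.sum_sub_distrib, ← Finset.mul_sum]
      congr 1
      rw [← Finset.sum_subset hsubk]
      · refine Finset.sum_congr rfl fun t ht => ?_
        rw [if_pos (Finset.mem_Icc.mp ht).2]
      · intro t ht hts
        rw [Finset.mem_Icc] at ht
        have : ¬ (t ≤ k) := by
          intro hle
          exact hts (Finset.mem_Icc.mpr ⟨ht.1, hle⟩)
        rw [if_neg this]
    rw [step1, step2]
    ring
  -- the family of scaled errors
  set ι' := {x // x ∈ Finset.Icc 1 N ×ˢ Finset.Icc 1 T} with hι'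
  set g : ι' → Ω → ℝ := fun p ω => c (p : ℕ × ℕ).2 * e (p : ℕ × ℕ).1 (p : ℕ × ℕ).2 ω with hg
  set V' : ι' → ℝ := fun p => c (p : ℕ × ℕ).2 ^ 2 * (v (p : ℕ × ℕ).1 : ℝ) with hV'
  have hmem : ∀ p : ι', (p : ℕ × ℕ).1 ∈ Finset.Icc 1 N ∧ (p : ℕ × ℕ).2 ∈ Finset.Icc 1 T :=
    fun p => Finset.mem_product.mp p.property
  have hvne : ∀ p : ι', v (p : ℕ × ℕ).1 ≠ 0 := fun p => (hv _ (hmem p).1).ne'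
  have hmapp : ∀ p : ι', Measure.map (e (p : ℕ × ℕ).1 (p : ℕ × ℕ).2) P
      = gaussianReal 0 (v (p : ℕ × ℕ).1) :=
    fun p => hgauss _ (hmem p).1 _ (hmem p).2
  have hmeas' : ∀ p : ι', Measurable (g p) := fun p => (hmeas _ _).const_mul _
  have hindep' : iIndepFun g P := by
    have := hindep.comp (fun p : ι' => fun x : ℝ => c (p : ℕ × ℕ).2 * x)
      (fun p => measurable_id.const_mul _)
    exact this
  have he_int : ∀ (p : ι') (n : ℕ),
      Integrable (fun ω => e (p : ℕ × ℕ).1 (p : ℕ × ℕ).2 ω ^ n) P :=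
    fun p n => rv_pow_integrable (hmeas _ _) (hvne p) (hmapp p) n
  have hg_int : ∀ (p : ι') (n : ℕ), Integrable (fun ω => g p ω ^ n) P := by
    intro p n
    have h := (he_int p n).const_mul (c (p : ℕ × ℕ).2 ^ n)
    refine h.congr ?_
    filter_upwards with ω
    simp only [hg]
    rw [mul_pow]
  have hg_eq : ∀ (p : ι') (n : ℕ), ∫ ω, g p ω ^ n ∂P
      = c (p : ℕ × ℕ).2 ^ n * ∫ x, x ^ n ∂(gaussianReal 0 (v (p : ℕ × ℕ).1)) := by
    intro p n
    rw [← rv_pow_integral (hmeas _ _) (hmapp p) n, ← MeasureTheory.integral_const_mul]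
    congr 1; funext ω
    simp only [hg]
    rw [mul_pow]
  have h1 : ∀ p : ι', ∫ ω, g p ω ^ 1 ∂P = 0 := by
    intro p
    rw [hg_eq p 1, gauss_moment_odd _ (hvne p) (by decide), mul_zero]
  have h2 : ∀ p : ι', ∫ ω, g p ω ^ 2 ∂P = V' p := by
    intro p
    rw [hg_eq p 2, gauss_moment_two _ (hvne p)]
  have h3 : ∀ p : ι', ∫ ω, g p ω ^ 3 ∂P = 0 := by
    intro p
    rw [hg_eq p 3, gauss_moment_odd _ (hvne p) (by decide), mul_zero]
  have h4 : ∀ p : ι', ∫ ω, g p ω ^ 4 ∂P = 3 * V' p ^ 2 := by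
    intro p
    rw [hg_eq p 4, gauss_moment_four _ (hvne p)]
    simp only [hV']
    ring
  set s_i : Finset ι' := Finset.univ.filter (fun p : ι' => (p : ℕ × ℕ).1 = i) with hs_i
  obtain ⟨hIntS, _, _, _, hES4⟩ :=
    sum_moment4 g V' hindep' hmeas' hg_int h1 h2 h3 h4 s_i
  -- the bijection between `s_i` and `Icc 1 T`
  have hsum_g : ∀ ω, ∑ p ∈ s_i, g p ω = ∑ t ∈ Finset.Icc 1 T, c t * e i t ω := by
    intro ω
    refine Finset.sum_bij' (fun p _ => (p : ℕ × ℕ).2)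
      (fun t ht => ⟨(i, t), Finset.mem_product.mpr ⟨hi, ht⟩⟩) ?_ ?_ ?_ ?_ ?_
    · intro p _; exact (hmem p).2
    · intro t ht; simp [hs_i]
    · intro p hp
      have h1' : (p : ℕ × ℕ).1 = i := (Finset.mem_filter.mp hp).2
      exact Subtype.ext (Prod.ext_iff.mpr ⟨h1'.symm, rfl⟩)
    · intro t ht; rfl
    · intro p hp
      have h1' : (p : ℕ × ℕ).1 = i := (Finset.mem_filter.mp hp).2
      simp only [hg, h1']
  have hsum_V : ∑ p ∈ s_i, V' p = ∑ t ∈ Finset.Icc 1 T, c t ^ 2 * (v i : ℝ) := by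
    refine Finset.sum_bij' (fun p _ => (p : ℕ × ℕ).2)
      (fun t ht => ⟨(i, t), Finset.mem_product.mpr ⟨hi, ht⟩⟩) ?_ ?_ ?_ ?_ ?_
    · intro p _; exact (hmem p).2
    · intro t ht; simp [hs_i]
    · intro p hp
      have h1' : (p : ℕ × ℕ).1 = i := (Finset.mem_filter.mp hp).2
      exact Subtype.ext (Prod.ext_iff.mpr ⟨h1'.symm, rfl⟩)
    · intro t ht; rfl
    · intro p hp
      have h1' : (p : ℕ × ℕ).1 = i := (Finset.mem_filter.mp hp).2
      simp only [hV', h1']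
  -- sum of squared coefficients
  have hite_sum : ∑ t ∈ Finset.Icc 1 T, (if t ≤ k then (1:ℝ) else 0) = (k:ℝ) := by
    rw [← Finset.sum_subset hsubk]
    · rw [Finset.sum_congr rfl (fun t ht => if_pos (Finset.mem_Icc.mp ht).2),
        Finset.sum_const, hcardk, nsmul_eq_mul, mul_one]
    · intro t ht hts
      rw [Finset.mem_Icc] at ht
      have : ¬ (t ≤ k) := by
        intro hle
        exact hts (Finset.mem_Icc.mpr ⟨ht.1, hle⟩)
      rw [if_neg this]
  have hc2 : ∑ t ∈ Finset.Icc 1 T, c t ^ 2 = (T:ℝ) * m r := by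
    have hterm : ∀ t, c t ^ 2
        = (if t ≤ k then (1:ℝ) else 0) * (1 - 2 * ((k:ℝ)/T)) + ((k:ℝ)/T)^2 := by
      intro t
      by_cases h : t ≤ k <;> simp [hc, h] <;> ring
    simp only [hterm]
    rw [Finset.sum_add_distrib, ← Finset.sum_mul, hite_sum, Finset.sum_const, hcard,
      nsmul_eq_mul]
    rw [hr, m]
    field_simp
    ring
  -- assemble
  have hksum : (∑ t ∈ Finset.Icc 1 T, c t ^ 2 * (v i : ℝ)) = (T:ℝ) * m r * (v i : ℝ) := by
    rw [← Finset.sum_mul, hc2]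
  have hEsum : ∫ ω, (∑ t ∈ Finset.Icc 1 T, c t * e i t ω) ^ 4 ∂P
      = 3 * ((T:ℝ) * m r * (v i : ℝ)) ^ 2 := by
    have h := hES4
    simp only [hsum_g] at h
    rw [h, hsum_V, hksum]
  have hIntSum : Integrable (fun ω => (∑ t ∈ Finset.Icc 1 T, c t * e i t ω) ^ 4) P := by
    have h := hIntS 4
    refine h.congr ?_
    filter_upwards with ω
    rw [hsum_g ω]
  have hsqrt4 : ((Real.sqrt T)⁻¹) ^ 4 = ((T:ℝ) ^ 2)⁻¹ := by
    rw [inv_pow]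
    congr 1
    rw [show (4:ℕ) = 2 * 2 from rfl, pow_mul, Real.sq_sqrt hTR.le]
  have hptwise : ∀ ω, (cusum T (fun t => Y i t ω) r) ^ 4
      = ((T:ℝ) ^ 2)⁻¹ * (∑ t ∈ Finset.Icc 1 T, c t * e i t ω) ^ 4 := by
    intro ω
    rw [hZ ω, mul_pow, hsqrt4]
  constructor
  · have h := hIntSum.const_mul ((T:ℝ) ^ 2)⁻¹
    refine h.congr ?_
    filter_upwards with ω
    rw [hptwise ω]
  · calc ∫ ω, (cusum T (fun t => Y i t ω) r) ^ 4 ∂P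
        = ∫ ω, ((T:ℝ) ^ 2)⁻¹ * (∑ t ∈ Finset.Icc 1 T, c t * e i t ω) ^ 4 ∂P := by
          congr 1; funext ω; rw [hptwise ω]
      _ = ((T:ℝ) ^ 2)⁻¹ * ∫ ω, (∑ t ∈ Finset.Icc 1 T, c t * e i t ω) ^ 4 ∂P :=
          MeasureTheory.integral_const_mul _ _
      _ = 3 * ((v i : ℝ)) ^ 2 * (m r) ^ 2 := by
          rw [hEsum]
          field_simp

/-- Under the null hypothesis of no change, with mutually
independent centered Gaussian errors `e i t` of variance `σ_i² = v i > 0`, the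
regression-based estimator `κ̂²_{N,T}(w)` is exactly unbiased for
`κ̄_N² = N⁻¹ ∑ σ_i⁴`. -/
theorem stmt19 {Ω : Type*} [MeasurableSpace Ω] (P : Measure Ω) [IsProbabilityMeasure P]
    (N T : ℕ) (hN : 1 ≤ N) (hT : 2 ≤ T)
    (μ : ℕ → ℝ) (v : ℕ → NNReal) (hv : ∀ i ∈ Finset.Icc 1 N, 0 < v i)
    (e : ℕ → ℕ → Ω → ℝ)
    (hmeas : ∀ i t, Measurable (e i t))
    (hindep : iIndepFun
      (fun p : (Finset.Icc 1 N ×ˢ Finset.Icc 1 T) =>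
        e (p : ℕ × ℕ).1 (p : ℕ × ℕ).2) P)
    (hgauss : ∀ i ∈ Finset.Icc 1 N, ∀ t ∈ Finset.Icc 1 T,
      Measure.map (e i t) P = gaussianReal 0 (v i))
    (Y : ℕ → ℕ → Ω → ℝ) (hY : ∀ i t ω, Y i t ω = μ i + e i t ω)
    (w : ℕ → ℝ) (hw : ∀ k ∈ Finset.Icc 1 (T - 1), 0 ≤ w k)
    (hw0 : ∃ k ∈ Finset.Icc 1 (T - 1), w k ≠ 0)
    (κhat : Ω → ℝ)
    (hκhat : ∀ ω, κhat ω = (1 / 3) *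
      (∑ k ∈ Finset.Icc 1 (T - 1), (m ((k : ℝ) / T)) ^ 4 * w k)⁻¹ *
      ∑ k ∈ Finset.Icc 1 (T - 1), (m ((k : ℝ) / T)) ^ 2 * w k *
        ((N : ℝ)⁻¹ * ∑ i ∈ Finset.Icc 1 N,
          (cusum T (fun t => Y i t ω) ((k : ℝ) / T)) ^ 4)) :
    ∫ ω, κhat ω ∂P = (N : ℝ)⁻¹ * ∑ i ∈ Finset.Icc 1 N, ((v i : ℝ)) ^ 2 := by
  classical
  have key := fun (i : ℕ) (hi : i ∈ Finset.Icc 1 N) (k : ℕ) (hk : k ∈ Finset.Icc 1 (T-1)) =>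
    cusum_pow4 P N T hT μ v hv e hmeas hindep hgauss Y hY i hi k hk
  set A : ℝ := ∑ k ∈ Finset.Icc 1 (T - 1), (m ((k : ℝ) / T)) ^ 4 * w k with hA
  set C0 : ℝ := (1 / 3) * A⁻¹ with hC0
  have hTR : (0:ℝ) < (T:ℝ) := by
    have : 0 < T := by omega
    exact_mod_cast this
  -- positivity of the normalizing sum
  have hApos : 0 < A := by
    obtain ⟨k₀, hk₀, hwk₀⟩ := hw0
    refine Finset.sum_pos' (fun k hk => mul_nonneg (by positivity) (hw k hk)) ⟨k₀, hk₀, ?_⟩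
    obtain ⟨hk1, hk2⟩ := Finset.mem_Icc.mp hk₀
    have hkR : (0:ℝ) < (k₀:ℝ) := by exact_mod_cast hk1
    have hkltT : k₀ < T := by omega
    have hkTlt : (k₀:ℝ) < (T:ℝ) := by exact_mod_cast hkltT
    have hm : 0 < m ((k₀:ℝ)/T) := by
      rw [m]
      have h1 : 0 < (k₀:ℝ)/T := by positivity
      have h2 : (k₀:ℝ)/T < 1 := by
        rw [div_lt_one hTR]; exact hkTlt
      exact mul_pos h1 (by linarith)
    exact mul_pos (pow_pos hm 4) ((hw k₀ hk₀).lt_of_ne (Ne.symm hwk₀))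
  have hAne : A ≠ 0 := hApos.ne'
  set coef : ℕ → ℝ := fun k => C0 * ((m ((k : ℝ) / T)) ^ 2 * w k) * (N:ℝ)⁻¹ with hcoef
  -- rewrite κhat as a double sum
  have hκ : ∀ ω, κhat ω = ∑ k ∈ Finset.Icc 1 (T - 1), ∑ i ∈ Finset.Icc 1 N,
      coef k * (cusum T (fun t => Y i t ω) ((k : ℝ) / T)) ^ 4 := by
    intro ω
    rw [hκhat ω, Finset.mul_sum]
    refine Finset.sum_congr rfl fun k hk => ?_
    rw [← Finset.mul_sum]
    simp only [hcoef, hC0]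
    ring
  -- integrate
  have hint_ki : ∀ k ∈ Finset.Icc 1 (T - 1), ∀ i ∈ Finset.Icc 1 N,
      Integrable (fun ω => coef k * (cusum T (fun t => Y i t ω) ((k : ℝ) / T)) ^ 4) P :=
    fun k hk i hi => ((key i hi k hk).1).const_mul _
  calc ∫ ω, κhat ω ∂P
      = ∫ ω, ∑ k ∈ Finset.Icc 1 (T - 1), ∑ i ∈ Finset.Icc 1 N,
          coef k * (cusum T (fun t => Y i t ω) ((k : ℝ) / T)) ^ 4 ∂P := by
        exact integral_congr_ae (Filter.Eventually.of_forall hκ)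
    _ = ∑ k ∈ Finset.Icc 1 (T - 1), ∑ i ∈ Finset.Icc 1 N,
          ∫ ω, coef k * (cusum T (fun t => Y i t ω) ((k : ℝ) / T)) ^ 4 ∂P := by
        rw [integral_finset_sum _ (fun k hk =>
          integrable_finset_sum _ (fun i hi => hint_ki k hk i hi))]
        refine Finset.sum_congr rfl fun k hk => ?_
        exact integral_finset_sum _ (fun i hi => hint_ki k hk i hi)
    _ = ∑ k ∈ Finset.Icc 1 (T - 1), ∑ i ∈ Finset.Icc 1 N,
          coef k * (3 * ((v i : ℝ)) ^ 2 * (m ((k : ℝ) / T)) ^ 2) := by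
        refine Finset.sum_congr rfl fun k hk => Finset.sum_congr rfl fun i hi => ?_
        rw [MeasureTheory.integral_const_mul, (key i hi k hk).2]
    _ = ∑ k ∈ Finset.Icc 1 (T - 1), ((m ((k : ℝ) / T)) ^ 4 * w k)
          * (A⁻¹ * ((N:ℝ)⁻¹ * ∑ i ∈ Finset.Icc 1 N, ((v i : ℝ)) ^ 2)) := by
        refine Finset.sum_congr rfl fun k hk => ?_
        rw [← Finset.mul_sum]
        have hinner : ∑ i ∈ Finset.Icc 1 N, (3 * ((v i : ℝ)) ^ 2 * (m ((k : ℝ) / T)) ^ 2)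
            = (3 * (m ((k : ℝ) / T)) ^ 2) * ∑ i ∈ Finset.Icc 1 N, ((v i : ℝ)) ^ 2 := by
          rw [Finset.mul_sum]
          exact Finset.sum_congr rfl fun i _ => by ring
        rw [hinner, hcoef, hC0]
        ring
    _ = A * (A⁻¹ * ((N:ℝ)⁻¹ * ∑ i ∈ Finset.Icc 1 N, ((v i : ℝ)) ^ 2)) := by
        rw [← Finset.sum_mul, ← hA]
    _ = (N : ℝ)⁻¹ * ∑ i ∈ Finset.Icc 1 N, ((v i : ℝ)) ^ 2 := by
        rw [← mul_assoc, mul_inv_cancel₀ hAne, one_mul]
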